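/- A symmetric m×m real matrix A with nonnegative entries satisfies: there exists a row-stochastic matrix X with A = (X + Xᵀ)/2, if and only if A ∈ 𝐔^m, i.e., for every subset α ⊆ {1,…,m} we have ∑_{i,j∈α} a_{ij} ≤ |α|, and ∑_{i,j=1}^m a_{ij} = m. -/

import Mathlib

open Matrix Finset

set_option maxHeartbeats 1000000

def IsInU {m : ℕ} (A : Matrix (Fin m) (Fin m) ℝ) : Prop :=
  A.IsSymm ∧ (∀ i j, 0 ≤ A i j) ∧
    ∀ α : Finset (Fin m), ∑ i ∈ α, ∑ j ∈ α, A i j ≤ (α.card : ℝ)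

def IsInUtop {m : ℕ} (A : Matrix (Fin m) (Fin m) ℝ) : Prop :=
  IsInU A ∧ ∑ i, ∑ j, A i j = (m : ℝ)

def IsExtremeIn {m : ℕ} (S : Matrix (Fin m) (Fin m) ℝ → Prop)
    (A : Matrix (Fin m) (Fin m) ℝ) : Prop :=
  S A ∧ ∀ A₁ A₂, S A₁ → S A₂ → A₁ + A₂ = (2 : ℝ) • A → A₁ = A ∧ A₂ = A

def IsRowStochastic {m : ℕ} (X : Matrix (Fin m) (Fin m) ℝ) : Prop :=
  (∀ i j, 0 ≤ X i j) ∧ ∀ i, ∑ j, X i j = 1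

def IsSubstochastic {m : ℕ} (X : Matrix (Fin m) (Fin m) ℝ) : Prop :=
  (∀ i j, 0 ≤ X i j) ∧ ∀ i, ∑ j, X i j ≤ 1

/-- If `X i j + X j i = 2 A i j` pointwise, then over any box `α × α` the sums of X and A agree. -/
lemma sum_box_eq {m : ℕ} (α : Finset (Fin m)) (X : Fin m → Fin m → ℝ)
    (A : Matrix (Fin m) (Fin m) ℝ) (hK : ∀ i j, X i j + X j i = 2 * A i j) :
    ∑ i ∈ α, ∑ j ∈ α, X i j = ∑ i ∈ α, ∑ j ∈ α, A i j := by
  have h1 : ∑ i ∈ α, ∑ j ∈ α, X j i = ∑ i ∈ α, ∑ j ∈ α, X i j := Finset.sum_comm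
  have h2 : (∑ i ∈ α, ∑ j ∈ α, X i j) + (∑ i ∈ α, ∑ j ∈ α, X j i)
      = 2 * ∑ i ∈ α, ∑ j ∈ α, A i j := by
    rw [← Finset.sum_add_distrib, Finset.mul_sum]
    refine Finset.sum_congr rfl fun i _ => ?_
    rw [← Finset.sum_add_distrib, Finset.mul_sum]
    exact Finset.sum_congr rfl fun j _ => hK i j
  rw [h1] at h2
  linarith

/-- The perturbation used in the variational argument. -/
def pert {m : ℕ} (X : Fin m → Fin m → ℝ) (i j : Fin m) (δ : ℝ) : Fin m → Fin m → ℝ :=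
  fun k l => X k l + (if k = i ∧ l = j then -δ else 0) + (if k = j ∧ l = i then δ else 0)

lemma pert_row_sum {m : ℕ} (X : Fin m → Fin m → ℝ) (i j : Fin m) (_hij : i ≠ j) (δ : ℝ)
    (k : Fin m) :
    ∑ l, pert X i j δ k l = (∑ l, X k l) + (if k = i then -δ else 0) + (if k = j then δ else 0) := by
  unfold pert
  rw [Finset.sum_add_distrib, Finset.sum_add_distrib]
  congr 1
  · congr 1
    by_cases h : k = i <;> simp [h]
  · by_cases h : k = j <;> simp [h]

lemma exists_row_stochastic {m : ℕ} (A : Matrix (Fin m) (Fin m) ℝ)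
    (hsymm : A.IsSymm) (hnn : ∀ i j, 0 ≤ A i j)
    (hsub : ∀ α : Finset (Fin m), ∑ i ∈ α, ∑ j ∈ α, A i j ≤ (α.card : ℝ))
    (htot : ∑ i, ∑ j, A i j = (m : ℝ)) :
    ∃ X : Matrix (Fin m) (Fin m) ℝ, IsRowStochastic X ∧ A = (1/2 : ℝ) • (X + Xᵀ) := by
  classical
  rcases Nat.eq_zero_or_pos m with hm | hm
  · subst hm
    refine ⟨0, ⟨fun i j => le_refl 0, fun i => i.elim0⟩, ?_⟩
    ext i j; exact i.elim0
  -- the compact set K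
  set K : Set (Fin m → Fin m → ℝ) :=
    {X | (∀ i j, 0 ≤ X i j) ∧ ∀ i j, X i j + X j i = 2 * A i j} with hKdef
  have hKne : K.Nonempty := by
    refine ⟨fun i j => A i j, fun i j => hnn i j, fun i j => ?_⟩
    have h1 := hsymm.apply i j
    have h2 := hsymm.apply j i
    linarith
  have hKclosed : IsClosed K := by
    have : K = (⋂ (i : Fin m), ⋂ (j : Fin m), {X : Fin m → Fin m → ℝ | 0 ≤ X i j}) ∩
        (⋂ (i : Fin m), ⋂ (j : Fin m), {X : Fin m → Fin m → ℝ | X i j + X j i = 2 * A i j}) := by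
      ext X
      simp only [hKdef, Set.mem_setOf_eq, Set.mem_inter_iff, Set.mem_iInter]
    rw [this]
    refine IsClosed.inter ?_ ?_
    · refine isClosed_iInter fun i => isClosed_iInter fun j => ?_
      exact isClosed_le continuous_const ((continuous_apply j).comp (continuous_apply i))
    · refine isClosed_iInter fun i => isClosed_iInter fun j => ?_
      exact isClosed_eq (by fun_prop) continuous_const
  have hKcompact : IsCompact K := by
    have hsub' : K ⊆ Set.pi Set.univ fun i => Set.pi Set.univ fun j => Set.Icc (0:ℝ) (2 * A i j) := by
      rintro X ⟨h1, h2⟩ i _ j _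
      refine ⟨h1 i j, ?_⟩
      have := h2 i j
      have := h1 j i
      linarith
    exact IsCompact.of_isClosed_subset
      (isCompact_univ_pi fun i => isCompact_univ_pi fun j => isCompact_Icc) hKclosed hsub'
  -- the objective
  set g : (Fin m → Fin m → ℝ) → ℝ := fun X => ∑ i, ((∑ j, X i j) - 1)^2 with hgdef
  have hgcont : Continuous g := by
    refine continuous_finset_sum _ fun i _ => ?_
    exact ((continuous_finset_sum _ fun j _ =>
      (continuous_apply j).comp (continuous_apply i)).sub continuous_const).pow 2
  obtain ⟨X, hXK, hmin⟩ := hKcompact.exists_isMinOn hKne hgcont.continuousOn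
  obtain ⟨hXnn, hXA⟩ := hXK
  set R : Fin m → ℝ := fun i => ∑ j, X i j with hRdef
  -- key monotonicity along positive entries
  have key : ∀ i j, i ≠ j → 0 < X i j → R i ≤ R j := by
    intro i j hij hpos
    by_contra hlt
    push_neg at hlt  -- R j < R i
    set δ : ℝ := min (X i j) ((R i - R j) / 2) with hδdef
    have hδpos : 0 < δ := lt_min hpos (by linarith)
    have hδle1 : δ ≤ X i j := min_le_left _ _
    have hδle2 : δ ≤ (R i - R j) / 2 := min_le_right _ _
    set X' := pert X i j δ with hX'def
    have hX'K : X' ∈ K := by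
      constructor
      · intro k l
        have hnnkl := hXnn k l
        simp only [hX'def, pert]
        split_ifs with h1 h2 h2
        · exact absurd (h1.1.symm.trans h2.1) hij
        · obtain ⟨rfl, rfl⟩ := h1
          linarith [hδle1]
        · linarith [hδpos.le]
        · linarith
      · intro k l
        have hpair := hXA k l
        simp only [hX'def, pert]
        have e1 : (if l = j ∧ k = i then (δ:ℝ) else 0) = if k = i ∧ l = j then (δ:ℝ) else 0 := by
          by_cases h : k = i ∧ l = j
          · rw [if_pos ⟨h.2, h.1⟩, if_pos h]
          · rw [if_neg (fun hc => h ⟨hc.2, hc.1⟩), if_neg h]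
        have e2 : (if l = i ∧ k = j then (-δ:ℝ) else 0) = if k = j ∧ l = i then (-δ:ℝ) else 0 := by
          by_cases h : k = j ∧ l = i
          · rw [if_pos ⟨h.2, h.1⟩, if_pos h]
          · rw [if_neg (fun hc => h ⟨hc.2, hc.1⟩), if_neg h]
        have c1 : (if k = i ∧ l = j then (-δ:ℝ) else 0) + (if k = i ∧ l = j then (δ:ℝ) else 0) = 0 := by
          split_ifs <;> ring
        have c2 : (if k = j ∧ l = i then (δ:ℝ) else 0) + (if k = j ∧ l = i then (-δ:ℝ) else 0) = 0 := by
          split_ifs <;> ring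
        rw [e1, e2]
        linarith
    -- row sums of X'
    have hrow : ∀ k, ∑ l, pert X i j δ k l
        = (∑ l, X k l) + (if k = i then -δ else 0) + (if k = j then δ else 0) :=
      pert_row_sum X i j hij δ
    have hgX' : g X' < g X := by
      have hzero : ∀ k ∈ Finset.univ, k ∉ ({i, j} : Finset (Fin m)) →
          (((∑ l, X' k l) - 1)^2 - ((∑ l, X k l) - 1)^2) = 0 := by
        intro k _ hk
        simp only [Finset.mem_insert, Finset.mem_singleton, not_or] at hk
        rw [hX'def, hrow k, if_neg hk.1, if_neg hk.2]
        ring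
      have hsum : ∑ k, (((∑ l, X' k l) - 1)^2 - ((∑ l, X k l) - 1)^2) =
          (((∑ l, X' i l) - 1)^2 - ((∑ l, X i l) - 1)^2)
          + (((∑ l, X' j l) - 1)^2 - ((∑ l, X j l) - 1)^2) := by
        have h := (Finset.sum_subset (Finset.subset_univ ({i, j} : Finset (Fin m))) hzero).symm
        rwa [Finset.sum_pair hij] at h
      have hdiff : g X' - g X =
          (((∑ l, X' i l) - 1)^2 - ((∑ l, X i l) - 1)^2)
          + (((∑ l, X' j l) - 1)^2 - ((∑ l, X j l) - 1)^2) := by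
        rw [← hsum]
        simp only [hgdef, Finset.sum_sub_distrib]
      have hri : ∑ l, X' i l = (∑ l, X i l) - δ := by
        rw [hX'def, hrow i, if_pos rfl, if_neg hij]; ring
      have hrj : ∑ l, X' j l = (∑ l, X j l) + δ := by
        rw [hX'def, hrow j, if_neg (Ne.symm hij), if_pos rfl]; ring
      have h2' : δ ≤ ((∑ l, X i l) - (∑ l, X j l)) / 2 := hδle2
      rw [hri, hrj] at hdiff
      have hid : (((∑ l, X i l) - δ - 1)^2 - ((∑ l, X i l) - 1)^2)
          + (((∑ l, X j l) + δ - 1)^2 - ((∑ l, X j l) - 1)^2)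
          = 2 * δ * ((∑ l, X j l) - (∑ l, X i l) + δ) := by ring
      rw [hid] at hdiff
      have hba : (∑ l, X j l) - (∑ l, X i l) + δ ≤ -δ := by linarith
      have hneg : 2 * δ * ((∑ l, X j l) - (∑ l, X i l) + δ) < 0 := by
        nlinarith [mul_le_mul_of_nonneg_left hba hδpos.le, mul_pos hδpos hδpos]
      linarith
    exact absurd (hmin hX'K) (not_le.mpr hgX')
  -- every row sum is ≤ 1
  have hRle1 : ∀ i, R i ≤ 1 := by
    intro i₀
    obtain ⟨s, _, hsmax⟩ := Finset.exists_max_image Finset.univ R ⟨i₀, Finset.mem_univ i₀⟩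
    have hs1 : R s ≤ 1 := by
      by_contra h
      push_neg at h
      set α : Finset (Fin m) := Finset.univ.filter fun i => R i = R s with hαdef
      have hsα : s ∈ α := by simp [hαdef]
      have hcut : ∀ i ∈ α, ∀ j, j ∉ α → X i j = 0 := by
        intro i hi j hj
        simp only [hαdef, Finset.mem_filter, Finset.mem_univ, true_and] at hi hj
        by_contra hne
        have hpos : 0 < X i j := lt_of_le_of_ne (hXnn i j) (Ne.symm hne)
        have hij : i ≠ j := by rintro rfl; exact hj hi
        have h1 := key i j hij hpos
        have h2 := hsmax j (Finset.mem_univ j)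
        rw [hi] at h1
        exact hj (le_antisymm h2 h1)
      have h1 : ∑ i ∈ α, R i = ∑ i ∈ α, ∑ j ∈ α, X i j := by
        refine Finset.sum_congr rfl fun i hi => ?_
        exact (Finset.sum_subset (Finset.subset_univ α) fun j _ hj => hcut i hi j hj).symm
      have h2 : ∑ i ∈ α, ∑ j ∈ α, X i j = ∑ i ∈ α, ∑ j ∈ α, A i j := sum_box_eq α X A hXA
      have h3 : ∑ i ∈ α, R i ≤ (α.card : ℝ) := by rw [h1, h2]; exact hsub α
      have h4 : ∑ i ∈ α, R i = (α.card : ℝ) * R s := by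
        rw [Finset.sum_congr rfl fun i hi => by
          simp only [hαdef, Finset.mem_filter] at hi; exact hi.2]
        simp [mul_comm]
      have hcard : 0 < α.card := Finset.card_pos.mpr ⟨s, hsα⟩
      have hcard' : (1:ℝ) ≤ (α.card : ℝ) := by exact_mod_cast hcard
      nlinarith
    exact le_trans (hsmax i₀ (Finset.mem_univ i₀)) hs1
  -- total is m, hence all row sums are 1
  have hRtot : ∑ i, R i = (m : ℝ) := by
    have := sum_box_eq Finset.univ X A hXA
    simp only [hRdef]
    rw [this, htot]
  have hR1 : ∀ i, R i = 1 := by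
    by_contra h
    push_neg at h
    obtain ⟨i, hi⟩ := h
    have hlt : R i < 1 := lt_of_le_of_ne (hRle1 i) hi
    have : ∑ i, R i < ∑ _i : Fin m, (1:ℝ) :=
      Finset.sum_lt_sum (fun k _ => hRle1 k) ⟨i, Finset.mem_univ i, hlt⟩
    simp only [Finset.sum_const, Finset.card_univ, Fintype.card_fin, nsmul_eq_mul, mul_one] at this
    rw [hRtot] at this
    exact lt_irrefl _ this
  refine ⟨Matrix.of X, ⟨fun i j => hXnn i j, fun i => hR1 i⟩, ?_⟩
  ext i j
  have := hXA i j
  simp only [Matrix.smul_apply, Matrix.add_apply, Matrix.transpose_apply, Matrix.of_apply,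
    smul_eq_mul]
  linarith

theorem stmt_0 {m : ℕ} (A : Matrix (Fin m) (Fin m) ℝ)
    (hsymm : A.IsSymm) (hnn : ∀ i j, 0 ≤ A i j) :
    (∃ X : Matrix (Fin m) (Fin m) ℝ, IsRowStochastic X ∧ A = (1/2 : ℝ) • (X + Xᵀ)) ↔
      IsInUtop A := by
  constructor
  · rintro ⟨X, ⟨hXnn, hXrow⟩, hA⟩
    have hXA : ∀ i j, X i j + X j i = 2 * A i j := by
      intro i j
      have : A i j = (1/2 : ℝ) * (X i j + X j i) := by
        rw [hA]; simp [Matrix.smul_apply, Matrix.add_apply, Matrix.transpose_apply]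
      rw [this]; ring
    have hbox : ∀ α : Finset (Fin m), ∑ i ∈ α, ∑ j ∈ α, A i j = ∑ i ∈ α, ∑ j ∈ α, X i j :=
      fun α => (sum_box_eq α X A hXA).symm
    refine ⟨⟨hsymm, hnn, fun α => ?_⟩, ?_⟩
    · rw [hbox α]
      calc ∑ i ∈ α, ∑ j ∈ α, X i j ≤ ∑ i ∈ α, ∑ j, X i j := by
            refine Finset.sum_le_sum fun i _ => ?_
            exact Finset.sum_le_sum_of_subset_of_nonneg (Finset.subset_univ α)
              fun j _ _ => hXnn i j
        _ = ∑ i ∈ α, (1:ℝ) := Finset.sum_congr rfl fun i _ => hXrow i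
        _ = (α.card : ℝ) := by simp
    · rw [hbox Finset.univ]
      calc ∑ i, ∑ j, X i j = ∑ _i : Fin m, (1:ℝ) := Finset.sum_congr rfl fun i _ => hXrow i
        _ = (m : ℝ) := by simp
  · rintro ⟨⟨_, _, hsub⟩, htot⟩
    exact exists_row_stochastic A hsymm hnn hsub htot
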